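/- Let d ≥ 1, T > 0. Let Σ_μ, Σ_R, Σ_J ∈ ℝ^{d×d} be symmetric positive definite, κ ∈ ℝ^{d×d} be positive definite, and q₀ ∈ ℝ^{d×d} be symmetric positive semidefinite. Suppose P, Q : [0, T] → ℝ^{d×d} are differentiable with P(0) = Q(0) = q₀, with P(t) and Q(t) symmetric positive semidefinite for every t ∈ [0, T], and satisfying P'(t) = Σ_μ − κ P(t) − P(t) κᵀ − P(t) Σ_R^{-1} P(t) and Q'(t) = Σ_μ − κ Q(t) − Q(t) κᵀ − Q(t)(Σ_R^{-1} + Σ_J^{-1}) Q(t) for all t ∈ [0, T]. Then Q(t) ⪯ P(t) for all t ∈ [0, T], i.e., P(t) − Q(t) is positive semidefinite; in particular tr(Q(t)) ≤ tr(P(t)) for all t ∈ [0, T]. -/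

import Mathlib

open Matrix Real Set

section Aux

variable {d : ℕ}

lemma aux_qf_sum (M : Matrix (Fin d) (Fin d) ℝ) (v w : Fin d → ℝ) :
    v ⬝ᵥ (M *ᵥ w) = ∑ i, ∑ j, v i * (M i j * w j) := by
  simp [dotProduct, Matrix.mulVec, Finset.mul_sum]

lemma aux_dot_self_nonneg (x : Fin d → ℝ) : 0 ≤ x ⬝ᵥ x :=
  Finset.sum_nonneg fun i _ => mul_self_nonneg (x i)

lemma aux_dot_self_pos {x : Fin d → ℝ} (hx : x ≠ 0) : 0 < x ⬝ᵥ x :=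
  lt_of_le_of_ne (aux_dot_self_nonneg x)
    (fun h => hx (dotProduct_self_eq_zero.mp h.symm))

lemma aux_dot_symm {A : Matrix (Fin d) (Fin d) ℝ} (hsym : Aᵀ = A) (v w : Fin d → ℝ) :
    v ⬝ᵥ (A *ᵥ w) = (A *ᵥ v) ⬝ᵥ w := by
  rw [Matrix.dotProduct_mulVec, ← Matrix.mulVec_transpose, hsym]

lemma aux_scale (M : Matrix (Fin d) (Fin d) ℝ) (y : Fin d → ℝ) (a : ℝ) :
    (a • y) ⬝ᵥ (M *ᵥ (a • y)) = a ^ 2 * (y ⬝ᵥ (M *ᵥ y)) := by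
  rw [Matrix.mulVec_smul, smul_dotProduct, dotProduct_smul]
  simp [smul_eq_mul]; ring

lemma aux_dot_scale (y : Fin d → ℝ) (a : ℝ) : (a • y) ⬝ᵥ (a • y) = a ^ 2 * (y ⬝ᵥ y) := by
  rw [smul_dotProduct, dotProduct_smul]
  simp [smul_eq_mul]; ring

end Aux

section Aux2

lemma aux_quad_bound {d : ℕ} (A : Matrix (Fin d) (Fin d) ℝ) (x : Fin d → ℝ) :
    |x ⬝ᵥ A *ᵥ x| ≤ (∑ i, ∑ j, |A i j|) * (x ⬝ᵥ x) := by
  have hxx : ∀ i j : Fin d, |x i| * |x j| ≤ x ⬝ᵥ x := by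
    intro i j
    have h1 : x i ^ 2 ≤ x ⬝ᵥ x := by
      have : x i ^ 2 ≤ ∑ k, x k * x k := by
        refine Finset.single_le_sum (f := fun k => x k * x k) (fun k _ => mul_self_nonneg _) (Finset.mem_univ i) |>.trans_eq' (by ring)
      simpa [dotProduct] using this
    have h2 : x j ^ 2 ≤ x ⬝ᵥ x := by
      have : x j ^ 2 ≤ ∑ k, x k * x k := by
        refine Finset.single_le_sum (f := fun k => x k * x k) (fun k _ => mul_self_nonneg _) (Finset.mem_univ j) |>.trans_eq' (by ring)
      simpa [dotProduct] using this
    nlinarith [abs_nonneg (x i), abs_nonneg (x j), sq_abs (x i), sq_abs (x j), sq_nonneg (|x i| - |x j|)]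
  calc |x ⬝ᵥ A *ᵥ x| = |∑ i, ∑ j, x i * A i j * x j| := by
        simp [dotProduct, Matrix.mulVec, Finset.mul_sum, mul_assoc]
    _ ≤ ∑ i, ∑ j, |x i * A i j * x j| := by
        refine (Finset.abs_sum_le_sum_abs _ _).trans ?_
        exact Finset.sum_le_sum fun i _ => Finset.abs_sum_le_sum_abs _ _
    _ ≤ ∑ i, ∑ j, |A i j| * (x ⬝ᵥ x) := by
        refine Finset.sum_le_sum fun i _ => Finset.sum_le_sum fun j _ => ?_
        rw [abs_mul, abs_mul]
        calc |x i| * |A i j| * |x j| = |A i j| * (|x i| * |x j|) := by ring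
          _ ≤ |A i j| * (x ⬝ᵥ x) := mul_le_mul_of_nonneg_left (hxx i j) (abs_nonneg _)
    _ = (∑ i, ∑ j, |A i j|) * (x ⬝ᵥ x) := by rw [Finset.sum_mul]; congr 1; ext i; rw [Finset.sum_mul]

lemma aux_quadratic_zero (a b : ℝ) (ha : 0 ≤ a) (h : ∀ t : ℝ, 0 ≤ a * t ^ 2 + b * t) : b = 0 := by
  by_contra hb
  rcases ha.lt_or_eq with hap | hae
  · have h1 := h (-b / (2 * a))
    have e : a * (-b / (2 * a)) ^ 2 + b * (-b / (2 * a)) = -(b ^ 2) / (4 * a) := by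
      field_simp; ring
    rw [e] at h1
    have hb2 : 0 < b ^ 2 := by positivity
    have : -(b ^ 2) / (4 * a) < 0 := by
      apply div_neg_of_neg_of_pos <;> linarith
    linarith
  · have h1 := h (-b)
    rw [← hae] at h1
    nlinarith [mul_self_pos.mpr hb, h1]

lemma aux_psd_kernel {d : ℕ} (A : Matrix (Fin d) (Fin d) ℝ) (hsym : Aᵀ = A)
    (hpsd : ∀ y : Fin d → ℝ, 0 ≤ y ⬝ᵥ A *ᵥ y) (x : Fin d → ℝ) (hx : x ⬝ᵥ A *ᵥ x = 0) :
    A *ᵥ x = 0 := by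
  have key : ∀ y : Fin d → ℝ, y ⬝ᵥ A *ᵥ x = 0 := by
    intro y
    have hsymm : ∀ v w : Fin d → ℝ, v ⬝ᵥ A *ᵥ w = w ⬝ᵥ A *ᵥ v := by
      intro v w
      rw [aux_dot_symm hsym, dotProduct_comm]
    have h2 : 2 * (y ⬝ᵥ A *ᵥ x) = 0 := by
      refine aux_quadratic_zero (y ⬝ᵥ A *ᵥ y) (2 * (y ⬝ᵥ A *ᵥ x)) (hpsd y) ?_
      intro t
      have hp := hpsd (x + t • y)
      have hexp : (x + t • y) ⬝ᵥ A *ᵥ (x + t • y)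
          = x ⬝ᵥ A *ᵥ x + t * (y ⬝ᵥ A *ᵥ x) + t * (x ⬝ᵥ A *ᵥ y) + t^2 * (y ⬝ᵥ A *ᵥ y) := by
        simp [Matrix.mulVec_add, add_dotProduct, dotProduct_add, Matrix.mulVec_smul,
          smul_dotProduct, dotProduct_smul, smul_eq_mul]
        ring
      rw [hexp, hx, hsymm x y] at hp
      exact hp.trans_eq (by ring)
    linarith
  exact dotProduct_self_eq_zero.mp (key (A *ᵥ x))

lemma aux_deriv_nonpos {g : ℝ → ℝ} {v t₁ : ℝ} (ht : 0 < t₁) (hd : HasDerivAt g v t₁)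
    (hmin : ∀ t, 0 ≤ t → t < t₁ → g t₁ ≤ g t) : v ≤ 0 := by
  have hslope : Filter.Tendsto (slope g t₁) (nhdsWithin t₁ {t₁}ᶜ) (nhds v) :=
    (hasDerivAt_iff_tendsto_slope).mp hd
  have hsub : nhdsWithin t₁ (Iio t₁) ≤ nhdsWithin t₁ {t₁}ᶜ :=
    nhdsWithin_mono _ (fun t htl => ne_of_lt htl)
  refine le_of_tendsto (hslope.mono_left hsub) ?_
  have hmem : Ioo 0 t₁ ∈ nhdsWithin t₁ (Iio t₁) := Ioo_mem_nhdsLT ht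
  filter_upwards [hmem] with t htm
  rw [slope_def_field]
  have h1 : g t₁ ≤ g t := hmin t htm.1.le htm.2
  rw [div_nonpos_iff]
  left
  exact ⟨by linarith, by linarith [htm.2]⟩

end Aux2

theorem Q_J_le_Q_R
    (d : ℕ) (hd : 1 ≤ d)
    (T : ℝ) (hT : 0 < T)
    (Sμ SR SJ κ q₀ : Matrix (Fin d) (Fin d) ℝ)
    (hSμ : Sμ.PosDef) (hSR : SR.PosDef) (hSJ : SJ.PosDef)
    (hκ : ∀ x : Fin d → ℝ, x ≠ 0 → 0 < x ⬝ᵥ (κ *ᵥ x))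
    (hq₀ : q₀.PosSemidef)
    (P Q : ℝ → Matrix (Fin d) (Fin d) ℝ)
    (hP0 : P 0 = q₀) (hQ0 : Q 0 = q₀)
    (hPpsd : ∀ t ∈ Icc (0 : ℝ) T, (P t).PosSemidef)
    (hQpsd : ∀ t ∈ Icc (0 : ℝ) T, (Q t).PosSemidef)
    (hPdiff : ∀ t ∈ Icc (0 : ℝ) T, ∀ i j : Fin d,
      HasDerivAt (fun s => P s i j)
        ((Sμ - κ * P t - P t * κᵀ - P t * SR⁻¹ * P t) i j) t)
    (hQdiff : ∀ t ∈ Icc (0 : ℝ) T, ∀ i j : Fin d,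
      HasDerivAt (fun s => Q s i j)
        ((Sμ - κ * Q t - Q t * κᵀ - Q t * (SR⁻¹ + SJ⁻¹) * Q t) i j) t) :
    ∀ t ∈ Icc (0 : ℝ) T, (P t - Q t).PosSemidef ∧ (Q t).trace ≤ (P t).trace := by
  -- symmetry facts
  have hPsym : ∀ t ∈ Icc (0:ℝ) T, (P t)ᵀ = P t := by
    intro t ht; simpa [Matrix.IsSymm] using (hPpsd t ht).1
  have hQsym : ∀ t ∈ Icc (0:ℝ) T, (Q t)ᵀ = Q t := by
    intro t ht; simpa [Matrix.IsSymm] using (hQpsd t ht).1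
  have hSRsym : (SR⁻¹)ᵀ = SR⁻¹ := by simpa [Matrix.IsSymm] using hSR.inv.1
  have hSJinv : ∀ y : Fin d → ℝ, 0 ≤ y ⬝ᵥ (SJ⁻¹ *ᵥ y) := by
    intro y
    rcases eq_or_ne y 0 with h | h
    · simp [h]
    · have := hSJ.inv.dotProduct_mulVec_pos h
      have h2 : 0 < y ⬝ᵥ (SJ⁻¹ *ᵥ y) := by simpa using this
      exact h2.le
  -- continuity of entries on Icc
  have hPcont : ∀ i j, ContinuousOn (fun t => P t i j) (Icc (0:ℝ) T) :=
    fun i j t ht => ((hPdiff t ht i j).continuousAt).continuousWithinAt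
  have hQcont : ∀ i j, ContinuousOn (fun t => Q t i j) (Icc (0:ℝ) T) :=
    fun i j t ht => ((hQdiff t ht i j).continuousAt).continuousWithinAt
  -- the comparison matrix R and its entrywise bound
  set R : ℝ → Matrix (Fin d) (Fin d) ℝ := fun t => SR⁻¹ * (P t + Q t) with hRdef
  have hRcont : ContinuousOn (fun t => ∑ i, ∑ j, |R t i j|) (Icc (0:ℝ) T) := by
    apply continuousOn_finset_sum
    intro i _
    apply continuousOn_finset_sum
    intro j _
    have : ContinuousOn (fun t => R t i j) (Icc (0:ℝ) T) := by
      have : (fun t => R t i j) = fun t => ∑ k, SR⁻¹ i k * (P t k j + Q t k j) := by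
        funext t
        simp [hRdef, Matrix.mul_apply, Matrix.add_apply]
      rw [this]
      apply continuousOn_finset_sum
      intro k _
      exact continuousOn_const.mul ((hPcont k j).add (hQcont k j))
    exact this.abs
  obtain ⟨C, hC⟩ := (isCompact_Icc (a := (0:ℝ)) (b := T)).exists_bound_of_continuousOn hRcont
  set c : ℝ := max C 0 + 1 with hcdef
  have hRbound : ∀ t ∈ Icc (0:ℝ) T, ∑ i, ∑ j, |R t i j| ≤ c - 1 := by
    intro t ht
    have := hC t ht
    rw [Real.norm_eq_abs] at this
    have h2 := le_abs_self (∑ i, ∑ j, |R t i j|)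
    simp only [hcdef]
    have : C ≤ max C 0 := le_max_left _ _
    linarith [le_abs_self (∑ i, ∑ j, |R t i j|), hC t ht, Real.norm_eq_abs (∑ i, ∑ j, |R t i j|) ▸ hC t ht]
  have hc1 : (1:ℝ) ≤ c := by simp [hcdef]
  -- derivative of the perturbed quadratic form
  have hφderiv : ∀ (ε : ℝ) (y : Fin d → ℝ), ∀ t ∈ Icc (0:ℝ) T,
      HasDerivAt (fun s => y ⬝ᵥ ((P s - Q s) *ᵥ y) + ε * Real.exp (c * s) * (y ⬝ᵥ y))
        (y ⬝ᵥ ((((Sμ - κ * P t - P t * κᵀ - P t * SR⁻¹ * P t)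
            - (Sμ - κ * Q t - Q t * κᵀ - Q t * (SR⁻¹ + SJ⁻¹) * Q t))) *ᵥ y)
          + ε * (c * Real.exp (c * t)) * (y ⬝ᵥ y)) t := by
    intro ε y t ht
    have h1 : HasDerivAt (fun s => y ⬝ᵥ ((P s - Q s) *ᵥ y))
        (y ⬝ᵥ ((((Sμ - κ * P t - P t * κᵀ - P t * SR⁻¹ * P t)
            - (Sμ - κ * Q t - Q t * κᵀ - Q t * (SR⁻¹ + SJ⁻¹) * Q t))) *ᵥ y)) t := by
      have hfun : (fun s => y ⬝ᵥ ((P s - Q s) *ᵥ y))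
          = fun s => ∑ i, ∑ j, y i * ((P s i j - Q s i j) * y j) := by
        funext s
        rw [aux_qf_sum]
        simp [Matrix.sub_apply]
      rw [hfun, aux_qf_sum]
      simp only [Matrix.sub_apply]
      apply HasDerivAt.fun_sum
      intro i _
      apply HasDerivAt.fun_sum
      intro j _
      exact (((hPdiff t ht i j).sub (hQdiff t ht i j)).mul_const (y j)).const_mul (y i)
    have h2 : HasDerivAt (fun s => ε * Real.exp (c * s) * (y ⬝ᵥ y))
        (ε * (c * Real.exp (c * t)) * (y ⬝ᵥ y)) t := by
      have he : HasDerivAt (fun s => Real.exp (c * s)) (Real.exp (c * t) * c) t := by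
        have hcs : HasDerivAt (fun s : ℝ => c * s) c t := by
          simpa using (hasDerivAt_id t).const_mul c
        exact (Real.hasDerivAt_exp (c * t)).comp t hcs
      have := (he.const_mul ε).mul_const (y ⬝ᵥ y)
      exact this.congr_deriv (by ring)
    exact h1.add h2
  -- main perturbation claim
  have key : ∀ ε : ℝ, 0 < ε → ∀ t ∈ Icc (0:ℝ) T, ∀ x : Fin d → ℝ, ‖x‖ = 1 →
      0 < x ⬝ᵥ ((P t - Q t) *ᵥ x) + ε * Real.exp (c * t) * (x ⬝ᵥ x) := by
    intro ε hε
    by_contra hcon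
    push_neg at hcon
    obtain ⟨t₀, ht₀, x₀, hx₀norm, hbad⟩ := hcon
    set g : ℝ × (Fin d → ℝ) → ℝ :=
      fun p => p.2 ⬝ᵥ ((P p.1 - Q p.1) *ᵥ p.2) + ε * Real.exp (c * p.1) * (p.2 ⬝ᵥ p.2) with hgdef
    have hgcont : ContinuousOn g ((Icc (0:ℝ) T) ×ˢ (univ : Set (Fin d → ℝ))) := by
      have hq : ContinuousOn (fun p : ℝ × (Fin d → ℝ) => p.2 ⬝ᵥ ((P p.1 - Q p.1) *ᵥ p.2))
          ((Icc (0:ℝ) T) ×ˢ (univ : Set (Fin d → ℝ))) := by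
        have hfun : (fun p : ℝ × (Fin d → ℝ) => p.2 ⬝ᵥ ((P p.1 - Q p.1) *ᵥ p.2))
            = fun p => ∑ i, ∑ j, p.2 i * ((P p.1 i j - Q p.1 i j) * p.2 j) := by
          funext p
          rw [aux_qf_sum]
          simp [Matrix.sub_apply]
        rw [hfun]
        apply continuousOn_finset_sum
        intro i _
        apply continuousOn_finset_sum
        intro j _
        have hyi : ContinuousOn (fun p : ℝ × (Fin d → ℝ) => p.2 i)
            ((Icc (0:ℝ) T) ×ˢ (univ : Set (Fin d → ℝ))) :=
          ((continuous_apply i).comp continuous_snd).continuousOn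
        have hyj : ContinuousOn (fun p : ℝ × (Fin d → ℝ) => p.2 j)
            ((Icc (0:ℝ) T) ×ˢ (univ : Set (Fin d → ℝ))) :=
          ((continuous_apply j).comp continuous_snd).continuousOn
        have hent : ContinuousOn (fun p : ℝ × (Fin d → ℝ) => P p.1 i j - Q p.1 i j)
            ((Icc (0:ℝ) T) ×ˢ (univ : Set (Fin d → ℝ))) := by
          apply ContinuousOn.comp ((hPcont i j).sub (hQcont i j)) continuous_fst.continuousOn
          intro p hp
          exact hp.1
        exact hyi.mul (hent.mul hyj)
      have hxx : Continuous (fun p : ℝ × (Fin d → ℝ) => p.2 ⬝ᵥ p.2) := by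
        have : (fun p : ℝ × (Fin d → ℝ) => p.2 ⬝ᵥ p.2)
            = fun p => ∑ i, p.2 i * p.2 i := by
          funext p; simp [dotProduct]
        rw [this]
        exact continuous_finset_sum _ fun i _ =>
          ((continuous_apply i).comp continuous_snd).mul ((continuous_apply i).comp continuous_snd)
      have hexp : Continuous (fun p : ℝ × (Fin d → ℝ) => ε * Real.exp (c * p.1)) :=
        continuous_const.mul (Real.continuous_exp.comp (continuous_const.mul continuous_fst))
      exact hq.add ((hexp.mul hxx).continuousOn)
    set S : Set (ℝ × (Fin d → ℝ)) := (Icc (0:ℝ) T) ×ˢ (Metric.sphere (0 : Fin d → ℝ) 1) with hSdef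
    have hScomp : IsCompact S := isCompact_Icc.prod (isCompact_sphere _ _)
    set K : Set (ℝ × (Fin d → ℝ)) := {p ∈ S | g p ≤ 0} with hKdef
    have hKcomp : IsCompact K := by
      have hclosed : IsClosed K := by
        have hSclosed : IsClosed S := isClosed_Icc.prod Metric.isClosed_sphere
        have : K = S ∩ (g ⁻¹' Iic 0) := by
          ext p; simp [hKdef, Set.mem_sep_iff]
        rw [this]
        apply (hgcont.mono (prod_mono_right (subset_univ _))).preimage_isClosed_of_isClosed hSclosed isClosed_Iic
      exact hScomp.of_isClosed_subset hclosed (sep_subset _ _)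
    have hKne : K.Nonempty := by
      refine ⟨(t₀, x₀), ⟨⟨ht₀, ?_⟩, hbad⟩⟩
      simpa [mem_sphere_zero_iff_norm] using hx₀norm
    obtain ⟨⟨t₁, x⟩, hmem, hmin⟩ := hKcomp.exists_isMinOn hKne (continuous_fst.continuousOn)
    obtain ⟨⟨ht₁Icc, hxsph⟩, hle⟩ := hmem
    have hxnorm : ‖x‖ = 1 := mem_sphere_zero_iff_norm.mp hxsph
    have hxne : x ≠ 0 := by
      intro h; rw [h] at hxnorm; simp at hxnorm
    have hxxpos : 0 < x ⬝ᵥ x := aux_dot_self_pos hxne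
    have ht₁pos : 0 < t₁ := by
      rcases ht₁Icc.1.lt_or_eq with h | h
      · exact h
      · exfalso
        have hthis : g (t₁, x) ≤ 0 := hle
        have h0 : t₁ = 0 := h.symm
        rw [hgdef] at hthis
        simp only at hthis
        rw [h0, hP0, hQ0] at hthis
        simp at hthis
        nlinarith [mul_pos hε hxxpos, hthis]
    -- before t₁ the perturbed form is positive on the sphere
    have hbefore : ∀ t, 0 ≤ t → t < t₁ → ∀ y : Fin d → ℝ, ‖y‖ = 1 →
        0 < y ⬝ᵥ ((P t - Q t) *ᵥ y) + ε * Real.exp (c * t) * (y ⬝ᵥ y) := by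
      intro t ht0 htlt y hy
      by_contra hne
      push_neg at hne
      have hmemK : (t, y) ∈ K := by
        refine ⟨⟨⟨ht0, le_trans htlt.le ht₁Icc.2⟩, ?_⟩, hne⟩
        simpa [mem_sphere_zero_iff_norm] using hy
      have := hmin hmemK
      exact absurd this (by simpa using htlt.not_ge)
    -- before t₁ the perturbed form is nonnegative for every vector
    have hbefore' : ∀ t, 0 ≤ t → t < t₁ → ∀ y : Fin d → ℝ,
        0 ≤ y ⬝ᵥ ((P t - Q t) *ᵥ y) + ε * Real.exp (c * t) * (y ⬝ᵥ y) := by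
      intro t ht0 htlt y
      rcases eq_or_ne y 0 with h | h
      · simp [h]
      · set u : Fin d → ℝ := ‖y‖⁻¹ • y with hudef
        have hu : ‖u‖ = 1 := norm_smul_inv_norm h
        have hpos := hbefore t ht0 htlt u hu
        have hyu : y = ‖y‖ • u := by
          rw [hudef, smul_smul, mul_inv_cancel₀ (norm_ne_zero_iff.mpr h), one_smul]
        rw [hyu, aux_scale, aux_dot_scale]
        nlinarith [hpos, sq_nonneg ‖y‖]
    -- at t₁ the perturbed form is still nonnegative (by continuity from the left)
    have hat : ∀ y : Fin d → ℝ,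
        0 ≤ y ⬝ᵥ ((P t₁ - Q t₁) *ᵥ y) + ε * Real.exp (c * t₁) * (y ⬝ᵥ y) := by
      intro y
      have hconty : ContinuousAt (fun s => y ⬝ᵥ ((P s - Q s) *ᵥ y) + ε * Real.exp (c * s) * (y ⬝ᵥ y)) t₁ :=
        (hφderiv ε y t₁ ht₁Icc).continuousAt
      have htend : Filter.Tendsto (fun s => y ⬝ᵥ ((P s - Q s) *ᵥ y) + ε * Real.exp (c * s) * (y ⬝ᵥ y))
          (nhdsWithin t₁ (Iio t₁))
          (nhds (y ⬝ᵥ ((P t₁ - Q t₁) *ᵥ y) + ε * Real.exp (c * t₁) * (y ⬝ᵥ y))) :=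
        hconty.continuousWithinAt.tendsto
      refine ge_of_tendsto htend ?_
      have hmem : Ioo 0 t₁ ∈ nhdsWithin t₁ (Iio t₁) :=
        Ioo_mem_nhdsLT ht₁pos
      filter_upwards [hmem] with t htm
      exact hbefore' t htm.1.le htm.2 y
    -- the perturbed form vanishes at (t₁, x)
    set e : ℝ := ε * Real.exp (c * t₁) with hedef
    have hepos : 0 < e := mul_pos hε (Real.exp_pos _)
    have hzero : x ⬝ᵥ ((P t₁ - Q t₁) *ᵥ x) + e * (x ⬝ᵥ x) = 0 := by
      have h1 : x ⬝ᵥ ((P t₁ - Q t₁) *ᵥ x) + ε * Real.exp (c * t₁) * (x ⬝ᵥ x) ≤ 0 := hle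
      rw [← hedef] at h1
      have h2 := hat x
      linarith
    -- kernel property: (P t₁ - Q t₁) *ᵥ x = -e • x
    have hDx : (P t₁ - Q t₁) *ᵥ x = (-e) • x := by
      set Dε : Matrix (Fin d) (Fin d) ℝ := (P t₁ - Q t₁) + e • (1 : Matrix (Fin d) (Fin d) ℝ) with hDεdef
      have hqf : ∀ y : Fin d → ℝ, y ⬝ᵥ (Dε *ᵥ y) = y ⬝ᵥ ((P t₁ - Q t₁) *ᵥ y) + e * (y ⬝ᵥ y) := by
        intro y
        rw [hDεdef, Matrix.add_mulVec, dotProduct_add, Matrix.smul_mulVec,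
          Matrix.one_mulVec, dotProduct_smul, smul_eq_mul]
      have hsymDε : Dεᵀ = Dε := by
        rw [hDεdef, Matrix.transpose_add, Matrix.transpose_sub, hPsym t₁ ht₁Icc, hQsym t₁ ht₁Icc,
          Matrix.transpose_smul, Matrix.transpose_one]
      have hpsdDε : ∀ y : Fin d → ℝ, 0 ≤ y ⬝ᵥ (Dε *ᵥ y) := by
        intro y; rw [hqf y]; exact hat y
      have hxqf : x ⬝ᵥ (Dε *ᵥ x) = 0 := by rw [hqf x]; exact hzero
      have hker := aux_psd_kernel Dε hsymDε hpsdDε x hxqf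
      rw [hDεdef, Matrix.add_mulVec, Matrix.smul_mulVec, Matrix.one_mulVec] at hker
      have : (P t₁ - Q t₁) *ᵥ x = -(e • x) := by
        rw [eq_neg_iff_add_eq_zero]; exact hker
      rw [this, neg_smul]
    -- derivative at t₁ is nonpositive (left minimum)
    set E : Matrix (Fin d) (Fin d) ℝ :=
      (Sμ - κ * P t₁ - P t₁ * κᵀ - P t₁ * SR⁻¹ * P t₁)
        - (Sμ - κ * Q t₁ - Q t₁ * κᵀ - Q t₁ * (SR⁻¹ + SJ⁻¹) * Q t₁) with hEdef
    have hvle : x ⬝ᵥ (E *ᵥ x) + ε * (c * Real.exp (c * t₁)) * (x ⬝ᵥ x) ≤ 0 := by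
      refine aux_deriv_nonpos ht₁pos (hφderiv ε x t₁ ht₁Icc) ?_
      intro t ht0 htlt
      have h1 := hbefore' t ht0 htlt x
      have h2 : x ⬝ᵥ ((P t₁ - Q t₁) *ᵥ x) + ε * Real.exp (c * t₁) * (x ⬝ᵥ x) = 0 := by
        rw [← hedef]
        linarith [hzero]
      rw [h2]
      exact h1
    -- now show the derivative is positive: contradiction
    -- decompose E
    have hEeq : E = -(κ * (P t₁ - Q t₁)) - (P t₁ - Q t₁) * κᵀ
        - (P t₁ * SR⁻¹ * P t₁ - Q t₁ * SR⁻¹ * Q t₁) + Q t₁ * SJ⁻¹ * Q t₁ := by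
      rw [hEdef]
      noncomm_ring
    -- quadratic form pieces
    have hterm1 : x ⬝ᵥ ((κ * (P t₁ - Q t₁)) *ᵥ x) = -e * (x ⬝ᵥ (κ *ᵥ x)) := by
      rw [← Matrix.mulVec_mulVec, hDx, Matrix.mulVec_smul, dotProduct_smul, smul_eq_mul]
    have hterm2 : x ⬝ᵥ (((P t₁ - Q t₁) * κᵀ) *ᵥ x) = -e * (x ⬝ᵥ (κ *ᵥ x)) := by
      have hsymD : (P t₁ - Q t₁)ᵀ = P t₁ - Q t₁ := by
        rw [Matrix.transpose_sub, hPsym t₁ ht₁Icc, hQsym t₁ ht₁Icc]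
      rw [← Matrix.mulVec_mulVec, aux_dot_symm hsymD, hDx, smul_dotProduct, smul_eq_mul]
      have hx2 : x ⬝ᵥ (κᵀ *ᵥ x) = x ⬝ᵥ (κ *ᵥ x) := by
        rw [Matrix.dotProduct_mulVec, Matrix.vecMul_transpose, dotProduct_comm]
      rw [hx2]
    -- Riccati difference term
    have hqfP : x ⬝ᵥ ((P t₁ * SR⁻¹ * P t₁) *ᵥ x)
        = (P t₁ *ᵥ x) ⬝ᵥ (SR⁻¹ *ᵥ (P t₁ *ᵥ x)) := by
      rw [← Matrix.mulVec_mulVec, ← Matrix.mulVec_mulVec, aux_dot_symm (hPsym t₁ ht₁Icc)]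
    have hqfQR : x ⬝ᵥ ((Q t₁ * SR⁻¹ * Q t₁) *ᵥ x)
        = (Q t₁ *ᵥ x) ⬝ᵥ (SR⁻¹ *ᵥ (Q t₁ *ᵥ x)) := by
      rw [← Matrix.mulVec_mulVec, ← Matrix.mulVec_mulVec, aux_dot_symm (hQsym t₁ ht₁Icc)]
    have hqfQJ : x ⬝ᵥ ((Q t₁ * SJ⁻¹ * Q t₁) *ᵥ x)
        = (Q t₁ *ᵥ x) ⬝ᵥ (SJ⁻¹ *ᵥ (Q t₁ *ᵥ x)) := by
      rw [← Matrix.mulVec_mulVec, ← Matrix.mulVec_mulVec, aux_dot_symm (hQsym t₁ ht₁Icc)]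
    have hterm3 : x ⬝ᵥ ((P t₁ * SR⁻¹ * P t₁) *ᵥ x) - x ⬝ᵥ ((Q t₁ * SR⁻¹ * Q t₁) *ᵥ x)
        = -e * (x ⬝ᵥ (R t₁ *ᵥ x)) := by
      rw [hqfP, hqfQR]
      set p : Fin d → ℝ := P t₁ *ᵥ x with hpdef
      set q : Fin d → ℝ := Q t₁ *ᵥ x with hqdef
      have hpq : p ⬝ᵥ (SR⁻¹ *ᵥ q) = q ⬝ᵥ (SR⁻¹ *ᵥ p) := by
        rw [aux_dot_symm hSRsym, dotProduct_comm]
      have hdiff : p - q = (-e) • x := by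
        rw [hpdef, hqdef, ← Matrix.sub_mulVec, hDx]
      have hsum : p + q = (P t₁ + Q t₁) *ᵥ x := by
        rw [hpdef, hqdef, ← Matrix.add_mulVec]
      have hkey : p ⬝ᵥ (SR⁻¹ *ᵥ p) - q ⬝ᵥ (SR⁻¹ *ᵥ q) = (p - q) ⬝ᵥ (SR⁻¹ *ᵥ (p + q)) := by
        rw [sub_dotProduct, Matrix.mulVec_add, dotProduct_add, dotProduct_add]
        linarith [hpq]
      rw [hkey, hdiff, hsum, smul_dotProduct, Matrix.mulVec_mulVec, smul_eq_mul]
    -- assemble the quadratic form of E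
    have hEqf : x ⬝ᵥ (E *ᵥ x)
        = e * (x ⬝ᵥ (κ *ᵥ x)) + e * (x ⬝ᵥ (κ *ᵥ x)) + e * (x ⬝ᵥ (R t₁ *ᵥ x))
          + (Q t₁ *ᵥ x) ⬝ᵥ (SJ⁻¹ *ᵥ (Q t₁ *ᵥ x)) := by
      rw [hEeq]
      rw [Matrix.add_mulVec, Matrix.sub_mulVec, Matrix.sub_mulVec, Matrix.neg_mulVec,
        Matrix.sub_mulVec, dotProduct_add, dotProduct_sub, dotProduct_sub,
        dotProduct_neg, dotProduct_sub]
      rw [hterm1, hterm2, hqfQJ]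
      linarith [hterm3]
    -- contradiction
    have hκx : 0 < x ⬝ᵥ (κ *ᵥ x) := hκ x hxne
    have hq4 : 0 ≤ (Q t₁ *ᵥ x) ⬝ᵥ (SJ⁻¹ *ᵥ (Q t₁ *ᵥ x)) := hSJinv _
    have habs : |x ⬝ᵥ (R t₁ *ᵥ x)| ≤ (∑ i, ∑ j, |R t₁ i j|) * (x ⬝ᵥ x) := aux_quad_bound _ x
    have hRb := hRbound t₁ ht₁Icc
    have hbnd : -(c - 1) * (x ⬝ᵥ x) ≤ x ⬝ᵥ (R t₁ *ᵥ x) := by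
      have h1 : (∑ i, ∑ j, |R t₁ i j|) * (x ⬝ᵥ x) ≤ (c - 1) * (x ⬝ᵥ x) :=
        mul_le_mul_of_nonneg_right hRb hxxpos.le
      have h2 := neg_abs_le (x ⬝ᵥ (R t₁ *ᵥ x))
      linarith [habs, h1, h2]
    have hcterm : ε * (c * Real.exp (c * t₁)) * (x ⬝ᵥ x) = e * c * (x ⬝ᵥ x) := by
      rw [hedef]; ring
    rw [hcterm, hEqf] at hvle
    have h5 : e * (-(c - 1) * (x ⬝ᵥ x)) ≤ e * (x ⬝ᵥ (R t₁ *ᵥ x)) :=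
      mul_le_mul_of_nonneg_left hbnd hepos.le
    have h7 : 0 < e * (x ⬝ᵥ x) := mul_pos hepos hxxpos
    have h8 : 0 < e * (x ⬝ᵥ (κ *ᵥ x)) := mul_pos hepos hκx
    have h6 : e * (-(c - 1) * (x ⬝ᵥ x)) = -(e * c * (x ⬝ᵥ x)) + e * (x ⬝ᵥ x) := by ring
    rw [h6] at h5
    set A1 : ℝ := x ⬝ᵥ (κ *ᵥ x) with hA1
    set A2 : ℝ := x ⬝ᵥ (R t₁ *ᵥ x) with hA2
    set A3 : ℝ := (Q t₁ *ᵥ x) ⬝ᵥ (SJ⁻¹ *ᵥ (Q t₁ *ᵥ x)) with hA3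
    set A4 : ℝ := x ⬝ᵥ x with hA4
    set B1 : ℝ := e * c * A4 with hB1
    linarith [h5, h7, h8, hq4, hvle]
  -- conclude from the perturbation claim
  intro t ht
  have hDpsd : ∀ y : Fin d → ℝ, 0 ≤ y ⬝ᵥ ((P t - Q t) *ᵥ y) := by
    intro y
    rcases eq_or_ne y 0 with h | h
    · simp [h]
    · set u : Fin d → ℝ := ‖y‖⁻¹ • y with hudef
      have hu : ‖u‖ = 1 := norm_smul_inv_norm h
      have hune : u ≠ 0 := by
        intro h0; rw [h0] at hu; simp at hu
      have hu0 : 0 ≤ u ⬝ᵥ ((P t - Q t) *ᵥ u) := by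
        by_contra hneg
        push_neg at hneg
        set a : ℝ := u ⬝ᵥ ((P t - Q t) *ᵥ u) with hadef
        have hk : 0 < Real.exp (c * t) * (u ⬝ᵥ u) :=
          mul_pos (Real.exp_pos _) (aux_dot_self_pos hune)
        set ε : ℝ := (-a) / (2 * (Real.exp (c * t) * (u ⬝ᵥ u))) with hεdef
        have hεpos : 0 < ε := div_pos (neg_pos.mpr hneg) (by linarith)
        have hkey := key ε hεpos t ht u hu
        have heq : ε * Real.exp (c * t) * (u ⬝ᵥ u) = -a / 2 := by
          rw [hεdef]
          field_simp
          rw [mul_div_assoc, div_self (aux_dot_self_pos hune).ne', mul_one]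
        rw [← hadef, heq] at hkey
        linarith
      have hyu : y = ‖y‖ • u := by
        rw [hudef, smul_smul, mul_inv_cancel₀ (norm_ne_zero_iff.mpr h), one_smul]
      rw [hyu, aux_scale]
      nlinarith [hu0, sq_nonneg ‖y‖]
  constructor
  · exact Matrix.PosSemidef.of_dotProduct_mulVec_nonneg ((hPpsd t ht).1.sub (hQpsd t ht).1) fun y => by simpa using hDpsd y
  · have hdiag : ∀ i, 0 ≤ (P t - Q t) i i := by
      intro i
      have := hDpsd (Pi.single i 1)
      simpa [dotProduct, Matrix.mulVec, Pi.single_apply, Finset.sum_ite_eq,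
        Finset.mul_sum] using this
    have htr : 0 ≤ (P t - Q t).trace := Finset.sum_nonneg fun i _ => hdiag i
    rw [Matrix.trace_sub] at htr
    linarith
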